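/- Let γ(t) = U(t)Σ(t)V(t)* be a smooth path of n×m matrices with U(t) unitary n×n, V(t) unitary m×m, and Σ(t) real 'diagonal' (zero off the main diagonal) with real diagonal entries. Then ‖γ̇(t)‖_F² = ‖Σ̇(t)‖_F² + ‖A(t)Σ(t) − Σ(t)B(t)‖_F², where A = U*U̇ and B = V*V̇ are skew-Hermitian; in particular ‖γ̇(t)‖_F ≥ ‖Σ̇(t)‖_F. -/

import Mathlib

open scoped BigOperators
open Matrix

attribute [local instance] Matrix.frobeniusNormedAddCommGroup Matrix.frobeniusNormedSpace

/-- The Frobenius norm of a matrix. -/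
noncomputable def frobNorm {n m : ℕ} (A : Matrix (Fin n) (Fin m) ℂ) : ℝ :=
  Real.sqrt (∑ i, ∑ j, ‖A i j‖ ^ 2)

section aux
open Matrix Complex

lemma entry_hasDerivAt {n m : ℕ} {F : ℝ → Matrix (Fin n) (Fin m) ℂ}
    {F' : Matrix (Fin n) (Fin m) ℂ} {t : ℝ} (h : HasDerivAt F F' t) (i : Fin n) (j : Fin m) :
    HasDerivAt (fun s => F s i j) (F' i j) t := by
  let L : Matrix (Fin n) (Fin m) ℂ →ₗ[ℝ] ℂ :=
    { toFun := fun M => M i j, map_add' := fun _ _ => rfl, map_smul' := fun _ _ => rfl }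
  exact L.toContinuousLinearMap.hasFDerivAt.comp_hasDerivAt t h

/-- Differentiating `FᴴF = 1` entrywise: `F'ᴴ F + Fᴴ F' = 0`. -/
lemma skew_of_unitary {k : ℕ} {F : ℝ → Matrix (Fin k) (Fin k) ℂ}
    {F' : Matrix (Fin k) (Fin k) ℂ} {t : ℝ}
    (hF : ∀ s, (F s)ᴴ * F s = 1) (hd : HasDerivAt F F' t) :
    F'ᴴ * F t + (F t)ᴴ * F' = 0 := by
  ext i j
  have h1 : HasDerivAt (fun s => ∑ x, (starRingEnd ℂ) (F s x i) * F s x j)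
      (∑ x, ((starRingEnd ℂ) (F' x i) * F t x j + (starRingEnd ℂ) (F t x i) * F' x j)) t := by
    apply HasDerivAt.fun_sum; intro x _
    exact ((entry_hasDerivAt hd x i).star).mul (entry_hasDerivAt hd x j)
  have h2 : (fun s => ∑ x, (starRingEnd ℂ) (F s x i) * F s x j)
      = fun _ => (1 : Matrix (Fin k) (Fin k) ℂ) i j := by
    funext s
    have := congrFun (congrFun (hF s) i) j
    simpa [Matrix.mul_apply, Matrix.conjTranspose_apply] using this
  have h0 : (∑ x, ((starRingEnd ℂ) (F' x i) * F t x j + (starRingEnd ℂ) (F t x i) * F' x j)) = 0 := by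
    have := (h2 ▸ h1).unique (hasDerivAt_const t _)
    simpa using this
  simpa [Matrix.add_apply, Matrix.mul_apply, Matrix.conjTranspose_apply, Finset.sum_add_distrib]
    using h0

lemma triple_deriv {n m : ℕ}
    {U : ℝ → Matrix (Fin n) (Fin n) ℂ} {V : ℝ → Matrix (Fin m) (Fin m) ℂ}
    {W : ℝ → Matrix (Fin n) (Fin m) ℂ}
    {U' : Matrix (Fin n) (Fin n) ℂ} {V' : Matrix (Fin m) (Fin m) ℂ}
    {W' g' : Matrix (Fin n) (Fin m) ℂ} {t : ℝ}
    (hdU : HasDerivAt U U' t) (hdV : HasDerivAt V V' t) (hdW : HasDerivAt W W' t)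
    (hdγ : HasDerivAt (fun s => U s * W s * (V s)ᴴ) g' t) :
    g' = U' * W t * (V t)ᴴ + U t * W' * (V t)ᴴ + U t * W t * V'ᴴ := by
  ext i j
  have h1 : HasDerivAt (fun s => (U s * W s * (V s)ᴴ) i j) (g' i j) t :=
    entry_hasDerivAt hdγ i j
  have h2 : HasDerivAt (fun s => ∑ k, (∑ l, U s i l * W s l k) * (starRingEnd ℂ) (V s j k))
      (∑ k, ((∑ l, (U' i l * W t l k + U t i l * W' l k)) * (starRingEnd ℂ) (V t j k)
        + (∑ l, U t i l * W t l k) * (starRingEnd ℂ) (V' j k))) t := by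
    apply HasDerivAt.fun_sum; intro k _
    have hl : HasDerivAt (fun s => ∑ l, U s i l * W s l k)
        (∑ l, (U' i l * W t l k + U t i l * W' l k)) t := by
      apply HasDerivAt.fun_sum; intro l _
      exact (entry_hasDerivAt hdU i l).mul (entry_hasDerivAt hdW l k)
    exact hl.mul (entry_hasDerivAt hdV j k).star
  have heq : (fun s => (U s * W s * (V s)ᴴ) i j)
      = fun s => ∑ k, (∑ l, U s i l * W s l k) * (starRingEnd ℂ) (V s j k) := by
    funext s; simp [Matrix.mul_apply, Matrix.conjTranspose_apply]
  rw [heq] at h1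
  have := h1.unique h2
  rw [this]
  simp only [Matrix.add_apply, Matrix.mul_apply, Matrix.conjTranspose_apply,
    Finset.sum_add_distrib, Finset.sum_mul, add_mul, starRingEnd_apply]

noncomputable def fsq {n m : ℕ} (A : Matrix (Fin n) (Fin m) ℂ) : ℝ :=
  ∑ i, ∑ j, Complex.normSq (A i j)

lemma fsq_nonneg {n m : ℕ} (A : Matrix (Fin n) (Fin m) ℂ) : 0 ≤ fsq A :=
  Finset.sum_nonneg fun _ _ => Finset.sum_nonneg fun _ _ => Complex.normSq_nonneg _

lemma frobNorm_eq {n m : ℕ} (A : Matrix (Fin n) (Fin m) ℂ) : frobNorm A = Real.sqrt (fsq A) := by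
  unfold frobNorm fsq
  congr 1
  refine Finset.sum_congr rfl fun i _ => Finset.sum_congr rfl fun j _ => ?_
  rw [← Complex.normSq_eq_norm_sq]

lemma frobNorm_sq {n m : ℕ} (A : Matrix (Fin n) (Fin m) ℂ) : frobNorm A ^ 2 = fsq A := by
  rw [frobNorm_eq, Real.sq_sqrt (fsq_nonneg A)]

lemma fsq_eq_trace {n m : ℕ} (A : Matrix (Fin n) (Fin m) ℂ) :
    fsq A = (Matrix.trace (Aᴴ * A)).re := by
  unfold fsq
  rw [Matrix.trace]
  simp only [Matrix.diag_apply, Matrix.mul_apply, Matrix.conjTranspose_apply]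
  rw [Complex.re_sum, Finset.sum_comm]
  refine Finset.sum_congr rfl fun i _ => ?_
  rw [Complex.re_sum]
  refine Finset.sum_congr rfl fun j _ => ?_
  rw [← starRingEnd_apply, ← Complex.normSq_eq_conj_mul_self, Complex.ofReal_re]

lemma fsq_unitary {n m : ℕ} (P : Matrix (Fin n) (Fin n) ℂ) (Q : Matrix (Fin m) (Fin m) ℂ)
    (X : Matrix (Fin n) (Fin m) ℂ) (hP : Pᴴ * P = 1) (hQ : Qᴴ * Q = 1) :
    fsq (P * X * Qᴴ) = fsq X := by
  rw [fsq_eq_trace, fsq_eq_trace]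
  have h1 : (P * X * Qᴴ)ᴴ * (P * X * Qᴴ) = Q * (Xᴴ * X) * Qᴴ := by
    simp only [Matrix.conjTranspose_mul, Matrix.conjTranspose_conjTranspose, Matrix.mul_assoc]
    rw [← Matrix.mul_assoc Pᴴ P, hP, Matrix.one_mul]
  have h2 : Matrix.trace ((P * X * Qᴴ)ᴴ * (P * X * Qᴴ)) = Matrix.trace (Xᴴ * X) := by
    rw [h1, Matrix.trace_mul_comm, ← Matrix.mul_assoc, hQ, Matrix.one_mul]
  rw [h2]

lemma normSq_add_of (a b : ℂ) (h : a.re * b.re + a.im * b.im = 0) :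
    Complex.normSq (a + b) = Complex.normSq a + Complex.normSq b := by
  simp only [Complex.normSq_apply, Complex.add_re, Complex.add_im]
  nlinarith [h]

end aux

/-- For a smooth path `γ(t) = U(t) W(t) V(t)ᴴ` with `U`, `V` unitary and `W` real diagonal,
`‖γ̇‖_F² = ‖Ẇ‖_F² + ‖AW − WB‖_F²` where `A = UᴴU̇`, `B = VᴴV̇`; in particular
`‖γ̇‖_F ≥ ‖Ẇ‖_F`. -/
theorem frob_deriv_svd_path {n m : ℕ}
    (U : ℝ → Matrix (Fin n) (Fin n) ℂ) (V : ℝ → Matrix (Fin m) (Fin m) ℂ)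
    (W : ℝ → Matrix (Fin n) (Fin m) ℂ)
    (U' : Matrix (Fin n) (Fin n) ℂ) (V' : Matrix (Fin m) (Fin m) ℂ)
    (W' g' : Matrix (Fin n) (Fin m) ℂ) (t : ℝ)
    (hU : ∀ s, U s * (U s)ᴴ = 1) (hV : ∀ s, V s * (V s)ᴴ = 1)
    (hWdiag : ∀ s (i : Fin n) (j : Fin m), (i : ℕ) ≠ (j : ℕ) → W s i j = 0)
    (hWreal : ∀ s (i : Fin n) (j : Fin m), (W s i j).im = 0)
    (hdU : HasDerivAt U U' t) (hdV : HasDerivAt V V' t) (hdW : HasDerivAt W W' t)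
    (hdγ : HasDerivAt (fun s => U s * W s * (V s)ᴴ) g' t) :
    frobNorm g' ^ 2 =
        frobNorm W' ^ 2 +
          frobNorm ((U t)ᴴ * U' * W t - W t * ((V t)ᴴ * V')) ^ 2 ∧
      frobNorm W' ≤ frobNorm g' := by
  have hUu : ∀ s, (U s)ᴴ * U s = 1 := fun s => mul_eq_one_comm.mp (hU s)
  have hVu : ∀ s, (V s)ᴴ * V s = 1 := fun s => mul_eq_one_comm.mp (hV s)
  have hAskew : U'ᴴ * U t + (U t)ᴴ * U' = 0 := skew_of_unitary hUu hdU
  have hBskew : V'ᴴ * V t + (V t)ᴴ * V' = 0 := skew_of_unitary hVu hdV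
  set C : Matrix (Fin n) (Fin m) ℂ := (U t)ᴴ * U' * W t - W t * ((V t)ᴴ * V') with hC
  -- factorization of g'
  have hg : g' = U t * (W' + C) * (V t)ᴴ := by
    rw [triple_deriv hdU hdV hdW hdγ, hC]
    have e1 : U t * ((U t)ᴴ * U' * W t) = U' * W t := by
      rw [← Matrix.mul_assoc, ← Matrix.mul_assoc, hU t, Matrix.one_mul]
    have h3 : (V t)ᴴ * V' = -(V'ᴴ * V t) := eq_neg_of_add_eq_zero_right hBskew
    have e2 : W t * ((V t)ᴴ * V') * (V t)ᴴ = -(W t * V'ᴴ) := by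
      rw [h3]
      simp only [Matrix.mul_neg, Matrix.neg_mul, Matrix.mul_assoc, hV t, Matrix.mul_one]
    rw [Matrix.mul_add, Matrix.mul_sub, Matrix.add_mul, Matrix.sub_mul, e1,
      Matrix.mul_assoc (U t) (W t * ((V t)ᴴ * V')) ((V t)ᴴ), e2, Matrix.mul_neg,
      sub_neg_eq_add, ← Matrix.mul_assoc]
    abel
  -- derivative of W is diagonal with real entries
  have hW'diag : ∀ (i : Fin n) (j : Fin m), (i:ℕ) ≠ (j:ℕ) → W' i j = 0 := by
    intro i j hij
    have h1 := entry_hasDerivAt hdW i j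
    have h2 : (fun s => W s i j) = fun _ => (0:ℂ) := funext fun s => hWdiag s i j hij
    rw [h2] at h1
    exact h1.unique (hasDerivAt_const t 0)
  have hW'im : ∀ (i : Fin n) (j : Fin m), (W' i j).im = 0 := by
    intro i j
    have h1 : HasDerivAt (fun s => (W s i j).im) ((W' i j).im) t :=
      Complex.imCLM.hasFDerivAt.comp_hasDerivAt t (entry_hasDerivAt hdW i j)
    have h2 : (fun s => (W s i j).im) = fun _ => (0:ℝ) := funext fun s => hWreal s i j
    rw [h2] at h1
    exact h1.unique (hasDerivAt_const t 0)
  -- diagonal entries of A and B are purely imaginary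
  have hAre : ∀ i : Fin n, (((U t)ᴴ * U') i i).re = 0 := by
    intro i
    have h := congrFun (congrFun hAskew i) i
    have h2 : (U'ᴴ * U t) i i = (starRingEnd ℂ) (((U t)ᴴ * U') i i) := by
      simp [Matrix.mul_apply, Matrix.conjTranspose_apply, map_sum, mul_comm]
    simp only [Matrix.add_apply, Matrix.zero_apply] at h
    rw [h2] at h
    have h3 := congrArg Complex.re h
    simp only [Complex.add_re, Complex.conj_re, Complex.zero_re] at h3
    linarith
  have hBre : ∀ j : Fin m, (((V t)ᴴ * V') j j).re = 0 := by
    intro j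
    have h := congrFun (congrFun hBskew j) j
    have h2 : (V'ᴴ * V t) j j = (starRingEnd ℂ) (((V t)ᴴ * V') j j) := by
      simp [Matrix.mul_apply, Matrix.conjTranspose_apply, map_sum, mul_comm]
    simp only [Matrix.add_apply, Matrix.zero_apply] at h
    rw [h2] at h
    have h3 := congrArg Complex.re h
    simp only [Complex.add_re, Complex.conj_re, Complex.zero_re] at h3
    linarith
  -- diagonal entries of C are purely imaginary
  have hCre : ∀ (i : Fin n) (j : Fin m), (i:ℕ) = (j:ℕ) → (C i j).re = 0 := by
    intro i j hij
    have e1 : ((U t)ᴴ * U' * W t) i j = ((U t)ᴴ * U') i i * W t i j := by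
      rw [Matrix.mul_apply]
      refine Finset.sum_eq_single i (fun k _ hk => ?_) (fun h => absurd (Finset.mem_univ i) h)
      rw [hWdiag t k j (fun h' => hk (Fin.ext (by omega))), mul_zero]
    have e2 : (W t * ((V t)ᴴ * V')) i j = W t i j * ((V t)ᴴ * V') j j := by
      rw [Matrix.mul_apply]
      refine Finset.sum_eq_single j (fun l _ hl => ?_) (fun h => absurd (Finset.mem_univ j) h)
      rw [hWdiag t i l (fun h' => hl (Fin.ext (by omega))), zero_mul]
    rw [hC, Matrix.sub_apply, e1, e2]
    simp only [Complex.sub_re, Complex.mul_re, hWreal t i j, hAre i, hBre j,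
      zero_mul, mul_zero, sub_zero, zero_sub]
  -- Pythagoras for fsq
  have hfsq : fsq g' = fsq W' + fsq C := by
    rw [hg, fsq_unitary _ _ _ (hUu t) (hVu t)]
    unfold fsq
    rw [← Finset.sum_add_distrib]
    refine Finset.sum_congr rfl fun i _ => ?_
    rw [← Finset.sum_add_distrib]
    refine Finset.sum_congr rfl fun j _ => ?_
    rw [Matrix.add_apply]
    apply normSq_add_of
    rw [hW'im i j, zero_mul, add_zero]
    by_cases hij : (i:ℕ) = (j:ℕ)
    · rw [hCre i j hij, mul_zero]
    · rw [hW'diag i j hij, Complex.zero_re, zero_mul]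
  constructor
  · rw [frobNorm_sq, frobNorm_sq, frobNorm_sq, hfsq]
  · rw [frobNorm_eq, frobNorm_eq]
    apply Real.sqrt_le_sqrt
    have := fsq_nonneg C
    linarith [hfsq]
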